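/- (Theorem 2, main convergence result.) Under the algorithm setup with Assumption 1, Condition (C1), and Condition (C2): every accumulation point of the sequence ((W_n, H_n))_{n∈ℕ} belongs to VI(C, ∇f); that is, if (W★, H★) ∈ ℝ^{M×R} × ℝ^{R×N} is the limit of some subsequence ((W_{n_i}, H_{n_i}))_{i∈ℕ}, then W★ and H★ are entrywise nonnegative and for every entrywise-nonnegative W ∈ ℝ^{M×R} and H ∈ ℝ^{R×N}: (W − W★)•((W★H★ − V)H★ᵀ) + (H − H★)•(W★ᵀ(W★H★ − V)) ≥ 0. -/

import Mathlib

open Matrix Filter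

/-- Frobenius norm of a real matrix. -/
noncomputable def frob {m n : Type*} [Fintype m] [Fintype n] (X : Matrix m n ℝ) : ℝ :=
  Real.sqrt (∑ i, ∑ j, (X i j) ^ 2)

/-- Frobenius inner product of two real matrices. -/
noncomputable def fip {m n : Type*} [Fintype m] [Fintype n] (X Y : Matrix m n ℝ) : ℝ :=
  ∑ i, ∑ j, X i j * Y i j

/-- Entrywise projection onto the nonnegative orthant. -/
def pplus {m n : Type*} (X : Matrix m n ℝ) : Matrix m n ℝ :=
  Matrix.of fun i j => max (X i j) 0

/-- Entrywise nonnegativity of a matrix. -/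
def matNonneg {m n : Type*} (X : Matrix m n ℝ) : Prop := ∀ i j, 0 ≤ X i j

section API
variable {m n p q : Type*} [Fintype m] [Fintype n] [Fintype p] [Fintype q]

lemma fip_self_nonneg (X : Matrix m n ℝ) : 0 ≤ fip X X := by
  apply Finset.sum_nonneg; intro i _; apply Finset.sum_nonneg; intro j _
  exact mul_self_nonneg _

lemma frob_nonneg (X : Matrix m n ℝ) : 0 ≤ frob X := Real.sqrt_nonneg _

lemma frob_sq (X : Matrix m n ℝ) : frob X ^ 2 = fip X X := by
  rw [frob, Real.sq_sqrt]
  · simp [fip, sq]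
  · apply Finset.sum_nonneg; intro i _; apply Finset.sum_nonneg; intro j _; positivity

lemma fip_comm (X Y : Matrix m n ℝ) : fip X Y = fip Y X := by
  simp [fip, mul_comm]

lemma fip_sub_left (X Y Z : Matrix m n ℝ) : fip (X - Y) Z = fip X Z - fip Y Z := by
  simp [fip, sub_mul, Finset.sum_sub_distrib]

lemma fip_add_left (X Y Z : Matrix m n ℝ) : fip (X + Y) Z = fip X Z + fip Y Z := by
  simp [fip, add_mul, Finset.sum_add_distrib]

lemma fip_smul_left (c : ℝ) (X Y : Matrix m n ℝ) : fip (c • X) Y = c * fip X Y := by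
  simp [fip, Finset.mul_sum, mul_assoc]

lemma fip_smul_right (c : ℝ) (X Y : Matrix m n ℝ) : fip X (c • Y) = c * fip X Y := by
  rw [fip_comm, fip_smul_left, fip_comm]

lemma frob_zero : frob (0 : Matrix m n ℝ) = 0 := by simp [frob]

lemma frob_eq_zero_iff (X : Matrix m n ℝ) : frob X = 0 ↔ X = 0 := by
  constructor
  · intro h
    have h2 : fip X X = 0 := by rw [← frob_sq, h]; ring
    ext i j
    have := Finset.sum_eq_zero_iff_of_nonneg (fun i _ => Finset.sum_nonneg (fun j _ => mul_self_nonneg (X i j))) |>.mp h2 i (Finset.mem_univ i)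
    have := Finset.sum_eq_zero_iff_of_nonneg (fun j _ => mul_self_nonneg (X i j)) |>.mp this j (Finset.mem_univ j)
    simpa using mul_self_eq_zero.mp this
  · intro h; rw [h]; exact frob_zero

lemma abs_fip_le (X Y : Matrix m n ℝ) : fip X Y ≤ frob X * frob Y := by
  have := Finset.sum_mul_sq_le_sq_mul_sq Finset.univ
    (fun ij : m × n => X ij.1 ij.2) (fun ij : m × n => Y ij.1 ij.2)
  have hX : (∑ ij : m × n, X ij.1 ij.2 ^ 2) = frob X ^ 2 := by
    rw [frob_sq]; rw [Fintype.sum_prod_type]; simp [fip, sq]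
  have hY : (∑ ij : m × n, Y ij.1 ij.2 ^ 2) = frob Y ^ 2 := by
    rw [frob_sq]; rw [Fintype.sum_prod_type]; simp [fip, sq]
  have hXY : (∑ ij : m × n, X ij.1 ij.2 * Y ij.1 ij.2) = fip X Y := by
    rw [Fintype.sum_prod_type]; simp [fip]
  rw [hX, hY, hXY] at this
  nlinarith [frob_nonneg X, frob_nonneg Y, mul_nonneg (frob_nonneg X) (frob_nonneg Y)]

lemma frob_mul_le (A : Matrix m n ℝ) (B : Matrix n p ℝ) : frob (A * B) ≤ frob A * frob B := by
  have h : fip (A*B) (A*B) ≤ fip A A * fip B B := by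
    calc fip (A*B) (A*B) = ∑ i, ∑ j, (∑ k, A i k * B k j)^2 := by
          simp [fip, Matrix.mul_apply, sq]
    _ ≤ ∑ i, ∑ j, (∑ k, A i k ^2) * (∑ k, B k j ^2) := by
          apply Finset.sum_le_sum; intro i _; apply Finset.sum_le_sum; intro j _
          exact Finset.sum_mul_sq_le_sq_mul_sq _ _ _
    _ = (∑ i, ∑ k, A i k^2) * (∑ j, ∑ k, B k j^2) := by
          rw [Finset.sum_mul_sum]
    _ = fip A A * fip B B := by
          rw [fip, fip]
          congr 1
          · simp [sq]
          · rw [Finset.sum_comm]; simp [sq]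
  have h1 : frob (A*B) ^ 2 ≤ (frob A * frob B)^2 := by
    rw [frob_sq, mul_pow, frob_sq, frob_sq]; exact h
  calc frob (A*B) = Real.sqrt (frob (A*B)^2) := (Real.sqrt_sq (frob_nonneg _)).symm
    _ ≤ Real.sqrt ((frob A * frob B)^2) := Real.sqrt_le_sqrt h1
    _ = frob A * frob B := Real.sqrt_sq (mul_nonneg (frob_nonneg A) (frob_nonneg B))

lemma fip_eq_trace (X Y : Matrix m n ℝ) : fip X Y = Matrix.trace (Xᵀ * Y) := by
  simp only [fip, Matrix.trace, Matrix.diag, Matrix.mul_apply, Matrix.transpose_apply]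
  exact Finset.sum_comm

lemma fip_mul_left (A : Matrix m p ℝ) (B : Matrix p n ℝ) (C : Matrix m n ℝ) :
    fip (A * B) C = fip B (Aᵀ * C) := by
  rw [fip_eq_trace, fip_eq_trace, Matrix.transpose_mul, Matrix.mul_assoc]

lemma fip_adj (A : Matrix m p ℝ) (B : Matrix m n ℝ) (C : Matrix p n ℝ) :
    fip (Aᵀ * B) C = fip B (A * C) := by
  rw [fip_mul_left, Matrix.transpose_transpose]

lemma frob_eq_of_sq (X : Matrix m n ℝ) (Y : Matrix p q ℝ) (h : fip X X = fip Y Y) :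
    frob X = frob Y := by
  rw [← Real.sqrt_sq (frob_nonneg X), ← Real.sqrt_sq (frob_nonneg Y), frob_sq, frob_sq, h]

lemma frob_AAt (Wm : Matrix m p ℝ) : frob (Wm * Wmᵀ) = frob (Wmᵀ * Wm) := by
  apply frob_eq_of_sq
  rw [fip_eq_trace, fip_eq_trace]
  simp only [Matrix.transpose_mul, Matrix.transpose_transpose]
  calc Matrix.trace (Wm * Wmᵀ * (Wm * Wmᵀ)) = Matrix.trace (Wm * (Wmᵀ * (Wm * Wmᵀ))) := by
        rw [Matrix.mul_assoc]
    _ = Matrix.trace ((Wmᵀ * (Wm * Wmᵀ)) * Wm) := Matrix.trace_mul_comm _ _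
    _ = Matrix.trace (Wmᵀ * Wm * (Wmᵀ * Wm)) := by simp only [Matrix.mul_assoc]

lemma fip_transpose (X Y : Matrix m n ℝ) : fip Xᵀ Yᵀ = fip X Y := by
  simp only [fip, Matrix.transpose_apply]
  exact Finset.sum_comm

lemma entry_le_frob (X : Matrix m n ℝ) (i : m) (j : n) : |X i j| ≤ frob X := by
  have h : X i j ^ 2 ≤ frob X ^ 2 := by
    rw [frob_sq, fip]
    calc X i j ^2 = X i j * X i j := sq (X i j)
      _ ≤ ∑ j', X i j' * X i j' :=
          Finset.single_le_sum (f := fun j' => X i j' * X i j') (fun k _ => mul_self_nonneg _) (Finset.mem_univ j)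
      _ ≤ ∑ i', ∑ j', X i' j' * X i' j' :=
          Finset.single_le_sum (f := fun i' => ∑ j', X i' j' * X i' j')
            (fun k _ => Finset.sum_nonneg (fun l _ => mul_self_nonneg _)) (Finset.mem_univ i)
  calc |X i j| = Real.sqrt (X i j ^2) := (Real.sqrt_sq_eq_abs _).symm
    _ ≤ Real.sqrt (frob X ^2) := Real.sqrt_le_sqrt h
    _ = frob X := Real.sqrt_sq (frob_nonneg _)

lemma pplus_nonexp (X Y : Matrix m n ℝ) :
    fip (pplus X - pplus Y) (pplus X - pplus Y) ≤ fip (X - Y) (X - Y) := by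
  simp only [fip, Matrix.sub_apply, pplus, Matrix.of_apply]
  apply Finset.sum_le_sum; intro i _; apply Finset.sum_le_sum; intro j _
  rw [← sq, ← sq]
  have h := abs_max_sub_max_le_abs (X i j) (Y i j) 0
  calc (max (X i j) 0 - max (Y i j) 0)^2 = |max (X i j) 0 - max (Y i j) 0|^2 := (sq_abs _).symm
    _ ≤ |X i j - Y i j|^2 := pow_le_pow_left₀ (abs_nonneg _) h 2
    _ = (X i j - Y i j)^2 := sq_abs _

lemma fip_sub_right (X Y Z : Matrix m n ℝ) : fip X (Y - Z) = fip X Y - fip X Z := by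
  rw [fip_comm, fip_sub_left, fip_comm Y X, fip_comm Z X]

lemma fip_add_right (X Y Z : Matrix m n ℝ) : fip X (Y + Z) = fip X Y + fip X Z := by
  rw [fip_comm, fip_add_left, fip_comm Y X, fip_comm Z X]

lemma convex_comb_identity (a : ℝ) (X Y : Matrix m n ℝ) :
    fip (a • X + (1-a) • Y) (a • X + (1-a) • Y)
      = a * fip X X + (1-a) * fip Y Y - a*(1-a) * fip (X-Y) (X-Y) := by
  simp only [fip, Matrix.sub_apply, Matrix.add_apply, Matrix.smul_apply, smul_eq_mul,
    Finset.mul_sum, ← Finset.sum_sub_distrib, ← Finset.sum_add_distrib]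
  apply Finset.sum_congr rfl; intro i _; apply Finset.sum_congr rfl; intro j _; ring

lemma left_nonexp (Wm : Matrix m p ℝ) (u : Matrix p n ℝ) (μ : ℝ) (hμ0 : 0 ≤ μ)
    (hμ2 : μ * frob (Wmᵀ * Wm) ≤ 2) :
    fip (u - μ • (Wmᵀ * (Wm * u))) (u - μ • (Wmᵀ * (Wm * u))) ≤ fip u u := by
  set v := Wm * u with hv
  set Au := Wmᵀ * (Wm * u) with hAu
  have h1 : fip Au u = fip v v := by rw [hAu, fip_adj]
  have h2 : fip Au Au ≤ frob (Wmᵀ * Wm) * fip v v := by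
    calc fip Au Au = fip v (Wm * Au) := by rw [hAu, fip_adj]
      _ ≤ frob v * frob (Wm * Au) := abs_fip_le _ _
      _ ≤ frob v * (frob (Wm * Wmᵀ) * frob v) := by
          apply mul_le_mul_of_nonneg_left _ (frob_nonneg v)
          calc frob (Wm * Au) = frob ((Wm * Wmᵀ) * v) := by rw [hAu, hv, Matrix.mul_assoc]
            _ ≤ frob (Wm * Wmᵀ) * frob v := frob_mul_le _ _
      _ = frob (Wmᵀ * Wm) * fip v v := by rw [frob_AAt, ← frob_sq]; ring
  have h3 : 0 ≤ fip v v := fip_self_nonneg v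
  have h4 : 0 ≤ frob (Wmᵀ * Wm) := frob_nonneg _
  have expand : fip (u - μ • Au) (u - μ • Au)
      = fip u u - 2*μ * fip Au u + μ^2 * fip Au Au := by
    have hc : fip u Au = fip Au u := fip_comm _ _
    simp only [fip_sub_left, fip_sub_right, fip_smul_left, fip_smul_right, hc]
    ring
  rw [expand, h1]
  nlinarith [sq_nonneg μ, mul_le_mul_of_nonneg_left h2 (sq_nonneg μ),
    mul_nonneg hμ0 h3, mul_le_mul_of_nonneg_right hμ2 (mul_nonneg hμ0 h3)]

lemma right_nonexp (Hm : Matrix p n ℝ) (u : Matrix m p ℝ) (lam : ℝ) (h0 : 0 ≤ lam)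
    (h2 : lam * frob (Hmᵀ * Hm) ≤ 2) :
    fip (u - lam • ((u * Hm) * Hmᵀ)) (u - lam • ((u * Hm) * Hmᵀ)) ≤ fip u u := by
  have key := left_nonexp (Hmᵀ) (uᵀ) lam h0 (by rwa [Matrix.transpose_transpose, frob_AAt])
  rw [Matrix.transpose_transpose] at key
  have heq : (u - lam • ((u * Hm) * Hmᵀ))ᵀ = uᵀ - lam • (Hm * (Hmᵀ * uᵀ)) := by
    simp only [Matrix.transpose_sub, Matrix.transpose_smul, Matrix.transpose_mul,
      Matrix.transpose_transpose, Matrix.mul_assoc]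
  rw [← fip_transpose (u - lam • ((u * Hm) * Hmᵀ)), heq, ← fip_transpose u u]
  exact key

/-- Entrywise convergence of a sequence of matrices. -/
def MT (A : ℕ → Matrix m n ℝ) (L : Matrix m n ℝ) : Prop :=
  ∀ i j, Tendsto (fun k => A k i j) atTop (nhds (L i j))

lemma tendsto_entry_of_frob {A : ℕ → Matrix m n ℝ}
    (h : Tendsto (fun k => frob (A k)) atTop (nhds 0)) (i : m) (j : n) :
    Tendsto (fun k => A k i j) atTop (nhds 0) := by
  have habs : Tendsto (fun k => |A k i j|) atTop (nhds 0) :=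
    squeeze_zero (fun k => abs_nonneg _) (fun k => entry_le_frob (A k) i j) h
  exact (tendsto_zero_iff_abs_tendsto_zero _).mpr habs

lemma MT_of_frob {A : ℕ → Matrix m n ℝ} {L : Matrix m n ℝ}
    (h : Tendsto (fun k => frob (A k - L)) atTop (nhds 0)) : MT A L := by
  intro i j
  have := tendsto_entry_of_frob h i j
  simp only [Matrix.sub_apply] at this
  have h2 := this.add_const (L i j)
  simpa using h2

lemma MT.sub {A B : ℕ → Matrix m n ℝ} {L K : Matrix m n ℝ} (hA : MT A L) (hB : MT B K) :
    MT (fun k => A k - B k) (L - K) := by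
  intro i j; simpa [Matrix.sub_apply] using (hA i j).sub (hB i j)

lemma MT.const (L : Matrix m n ℝ) : MT (fun _ => L) L := fun i j => tendsto_const_nhds

lemma MT.mul {A : ℕ → Matrix m p ℝ} {B : ℕ → Matrix p n ℝ} {L : Matrix m p ℝ}
    {K : Matrix p n ℝ} (hA : MT A L) (hB : MT B K) : MT (fun k => A k * B k) (L * K) := by
  intro i j
  simp only [Matrix.mul_apply]
  exact tendsto_finset_sum _ (fun l _ => (hA i l).mul (hB l j))

lemma MT.transpose {A : ℕ → Matrix m n ℝ} {L : Matrix m n ℝ} (hA : MT A L) :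
    MT (fun k => (A k)ᵀ) Lᵀ := fun i j => hA j i

lemma MT.smul {A : ℕ → Matrix m n ℝ} {L : Matrix m n ℝ} {c : ℕ → ℝ} {c₀ : ℝ}
    (hc : Tendsto c atTop (nhds c₀)) (hA : MT A L) : MT (fun k => c k • A k) (c₀ • L) := by
  intro i j
  simpa [Matrix.smul_apply, smul_eq_mul] using hc.mul (hA i j)

lemma MT.pplus {A : ℕ → Matrix m n ℝ} {L : Matrix m n ℝ} (hA : MT A L) :
    MT (fun k => pplus (A k)) (pplus L) := by
  intro i j
  simpa [_root_.pplus, Matrix.of_apply] using (hA i j).max tendsto_const_nhds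

lemma MT.frobTendsto {A : ℕ → Matrix m n ℝ} {L : Matrix m n ℝ} (hA : MT A L) :
    Tendsto (fun k => frob (A k)) atTop (nhds (frob L)) := by
  have hsum : Tendsto (fun k => ∑ i, ∑ j, (A k i j)^2) atTop (nhds (∑ i, ∑ j, (L i j)^2)) :=
    tendsto_finset_sum _ (fun i _ => tendsto_finset_sum _ (fun j _ => (hA i j).pow 2))
  exact (Real.continuous_sqrt.tendsto _).comp hsum

lemma MT.congr' {A B : ℕ → Matrix m n ℝ} {L : Matrix m n ℝ} (hA : MT A L)
    (h : Tendsto (fun k => frob (A k - B k)) atTop (nhds 0)) : MT B L := by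
  intro i j
  have hd : Tendsto (fun k => (A k - B k) i j) atTop (nhds 0) := tendsto_entry_of_frob h i j
  have := (hA i j).sub hd
  simp only [Matrix.sub_apply, sub_sub_cancel, sub_zero] at this
  exact this

lemma MT.unique {A : ℕ → Matrix m n ℝ} {L K : Matrix m n ℝ} (hL : MT A L) (hK : MT A K) :
    L = K := by
  ext i j; exact tendsto_nhds_unique (hL i j) (hK i j)

lemma MT.comp {A : ℕ → Matrix m n ℝ} {L : Matrix m n ℝ} (hA : MT A L) {ψ : ℕ → ℕ}
    (hψ : StrictMono ψ) : MT (fun k => A (ψ k)) L :=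
  fun i j => (hA i j).comp hψ.tendsto_atTop

lemma MT.matNonneg_lim {A : ℕ → Matrix m n ℝ} {L : Matrix m n ℝ} (hA : MT A L)
    (h : ∀ k, matNonneg (A k)) : matNonneg L :=
  fun i j => le_of_tendsto_of_tendsto' tendsto_const_nhds (hA i j) (fun k => h k i j)


lemma fip_zero_right (X : Matrix m n ℝ) : fip X 0 = 0 := by simp [fip]

lemma fip_neg_neg (X Y : Matrix m n ℝ) : fip (-X) (-Y) = fip X Y := by simp [fip]

lemma frob_sub_comm (X Y : Matrix m n ℝ) : frob (X - Y) = frob (Y - X) := by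
  apply frob_eq_of_sq
  rw [← fip_neg_neg (X - Y), neg_sub]

lemma frob_pos {X : Matrix m n ℝ} (h : X ≠ 0) : 0 < frob X :=
  lt_of_le_of_ne (frob_nonneg X) (fun h0 => h ((frob_eq_zero_iff X).mp h0.symm))

lemma AtA_ne_zero {Wm : Matrix m p ℝ} (h : Wm ≠ 0) : Wmᵀ * Wm ≠ 0 := by
  intro h0
  apply h
  ext i j
  have hd : (Wmᵀ * Wm) j j = 0 := by rw [h0]; simp
  rw [Matrix.mul_apply] at hd
  simp only [Matrix.transpose_apply] at hd
  have := (Finset.sum_eq_zero_iff_of_nonneg (fun k _ => mul_self_nonneg (Wm k j))).mp hd i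
    (Finset.mem_univ i)
  simpa using mul_self_eq_zero.mp this

lemma frob_eq_sqrt_fip (X : Matrix m n ℝ) : frob X = Real.sqrt (fip X X) := by
  rw [← frob_sq, Real.sqrt_sq (frob_nonneg X)]

lemma frob_smul (c : ℝ) (X : Matrix m n ℝ) : frob (c • X) = |c| * frob X := by
  rw [frob_eq_sqrt_fip, fip_smul_left, fip_smul_right, ← mul_assoc, frob_eq_sqrt_fip,
    Real.sqrt_mul (mul_self_nonneg c), ← Real.sqrt_mul_self_eq_abs]

lemma MT.congr_event {A B : ℕ → Matrix m n ℝ} {L : Matrix m n ℝ} (hA : MT A L)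
    (h : ∀ᶠ k in atTop, A k = B k) : MT B L := by
  intro i j
  exact (hA i j).congr' (h.mono fun k hk => by rw [hk])

lemma vi_of_fixed {G Xs : Matrix m n ℝ} {c : ℝ} (hc : 0 < c)
    (hfix : Xs = pplus (Xs - c • G)) :
    ∀ X' : Matrix m n ℝ, matNonneg X' → 0 ≤ fip (X' - Xs) G := by
  have key : ∀ i j, 0 ≤ G i j ∧ Xs i j * G i j = 0 := by
    intro i j
    have he : Xs i j = max (Xs i j - c * G i j) 0 := by
      have := congrFun (congrFun hfix i) j
      simpa [pplus, Matrix.sub_apply, Matrix.smul_apply, smul_eq_mul] using this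
    have hGnn : 0 ≤ G i j := by
      have h1 : Xs i j - c * G i j ≤ Xs i j := by
        nth_rewrite 2 [he]; exact le_max_left _ _
      nlinarith
    refine ⟨hGnn, ?_⟩
    rcases eq_or_lt_of_le (by rw [he]; exact le_max_right _ _ : (0:ℝ) ≤ Xs i j) with h0 | hpos
    · rw [← h0]; ring
    · have : max (Xs i j - c * G i j) 0 = Xs i j - c * G i j := by
        rcases max_cases (Xs i j - c * G i j) 0 with ⟨h1, _⟩ | ⟨h1, _⟩
        · rw [h1]
        · rw [h1] at he; exact absurd he.symm (ne_of_gt hpos).symm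
      rw [this] at he
      have : c * G i j = 0 := by linarith
      have : G i j = 0 := by
        rcases mul_eq_zero.mp this with h | h
        · exact absurd h (ne_of_gt hc)
        · exact h
      rw [this]; ring
  intro X' hX'
  rw [fip]
  apply Finset.sum_nonneg; intro i _; apply Finset.sum_nonneg; intro j _
  have ⟨hG, hXG⟩ := key i j
  simp only [Matrix.sub_apply]
  have : (X' i j - Xs i j) * G i j = X' i j * G i j - Xs i j * G i j := by ring
  rw [this, hXG, sub_zero]
  exact mul_nonneg (hX' i j) hG

lemma exists_pos_eventually_le_of_liminf_pos {f : ℕ → ℝ} (h : 0 < atTop.liminf f) :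
    ∃ δ > (0:ℝ), ∀ᶠ n in atTop, δ ≤ f n := by
  rw [Filter.liminf_eq] at h
  by_contra hcon
  push_neg at hcon
  have : sSup {a | ∀ᶠ n in atTop, a ≤ f n} ≤ 0 := by
    apply Real.sSup_le _ le_rfl
    intro x hx
    by_contra hx0
    push_neg at hx0
    obtain ⟨n, h1, h2⟩ := ((hcon x hx0).and_eventually hx).exists
    linarith
  linarith

lemma mann_resid_tendsto {a t c : ℕ → ℝ} {m₀ : ℕ} {ε : ℝ}
    (hineq : ∀ n, m₀ ≤ n → a (n+1) ≤ a n - c n * t n)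
    (ha : ∀ n, 0 ≤ a n) (ht : ∀ n, 0 ≤ t n) (hc : ∀ n, 0 ≤ c n)
    (hε : 0 < ε) (hce : ∀ᶠ n in atTop, ε ≤ c n) :
    Tendsto t atTop (nhds 0) := by
  set s : ℕ → ℝ := fun k => c (k + m₀) * t (k + m₀) with hs
  have hs0 : ∀ k, 0 ≤ s k := fun k => mul_nonneg (hc _) (ht _)
  have hpartial : ∀ k, ∑ i ∈ Finset.range k, s i ≤ a m₀ - a (k + m₀) := by
    intro k
    induction k with
    | zero => simp
    | succ k ih =>
      rw [Finset.sum_range_succ]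
      have := hineq (k + m₀) (Nat.le_add_left _ _)
      have heq : k + m₀ + 1 = k + 1 + m₀ := by omega
      rw [heq] at this
      simp only [hs]
      linarith
  have hsum : Summable s := by
    apply summable_of_sum_range_le hs0
    intro k
    have := hpartial k
    have := ha (k + m₀)
    linarith
  have hs_tendsto : Tendsto s atTop (nhds 0) := hsum.tendsto_atTop_zero
  have hct : Tendsto (fun n => c n * t n) atTop (nhds 0) :=
    (tendsto_add_atTop_iff_nat m₀).mp hs_tendsto
  have hg : Tendsto (fun n => c n * t n / ε) atTop (nhds 0) := by
    simpa using hct.div_const ε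
  apply squeeze_zero' (Eventually.of_forall ht) _ hg
  filter_upwards [hce] with n hn
  rw [le_div_iff₀ hε, mul_comm]
  exact mul_le_mul_of_nonneg_right hn (ht n)


lemma aux_c_bound {α : ℕ → ℝ} (hα : ∀ n, α n ∈ Set.Icc (0:ℝ) 1)
    (h1 : 0 < atTop.liminf (fun n => α n)) (h2 : atTop.limsup (fun n => α n) < 1) :
    ∃ ε > (0:ℝ), ∀ᶠ n in atTop, ε ≤ α n * (1 - α n) := by
  obtain ⟨δ, hδ, hev⟩ := exists_pos_eventually_le_of_liminf_pos h1
  have hbdd : IsBoundedUnder (· ≤ ·) atTop (fun n => α n) :=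
    ⟨1, Filter.eventually_map.mpr (Eventually.of_forall (fun n => (hα n).2))⟩
  set a : ℝ := (atTop.limsup (fun n => α n) + 1)/2 with ha
  have ha1 : a < 1 := by rw [ha]; linarith
  have hlta : atTop.limsup (fun n => α n) < a := by rw [ha]; linarith
  have hev2 : ∀ᶠ n in atTop, α n < a := eventually_lt_of_limsup_lt hlta hbdd
  refine ⟨δ * (1 - a), by nlinarith, ?_⟩
  filter_upwards [hev, hev2] with n hn1 hn2
  nlinarith [(hα n).1, (hα n).2]

lemma fip_res_symm (X Y Z : Matrix m n ℝ) :
    fip ((X - Y) - (Z - Y)) ((X - Y) - (Z - Y)) = fip (Z - X) (Z - X) := by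
  rw [sub_sub_sub_cancel_right, ← fip_neg_neg (X - Z), neg_sub]

end API

theorem stmt_17
    (M N R : ℕ) (hM : 0 < M) (hN : 0 < N) (hR : 0 < R)
    (V : Matrix (Fin M) (Fin N) ℝ)
    (W : ℕ → Matrix (Fin M) (Fin R) ℝ) (H : ℕ → Matrix (Fin R) (Fin N) ℝ)
    (α β μ lam : ℕ → ℝ)
    (T : ℕ → Matrix (Fin R) (Fin N) ℝ → Matrix (Fin R) (Fin N) ℝ)
    (S : ℕ → Matrix (Fin M) (Fin R) ℝ → Matrix (Fin M) (Fin R) ℝ)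
    (hW0 : matNonneg (W 0)) (hH0 : matNonneg (H 0))
    (hα : ∀ n, α n ∈ Set.Icc (0:ℝ) 1) (hβ : ∀ n, β n ∈ Set.Icc (0:ℝ) 1)
    (hμ : ∀ n, W n ≠ 0 → 0 < μ n ∧ μ n ≤ 2 / frob ((W n)ᵀ * W n))
    (hT : ∀ n, W n ≠ 0 → ∀ X, T n X = pplus (X - μ n • ((W n)ᵀ * (W n * X - V))))
    (hT0 : ∀ n, W n = 0 → ∀ X, T n X = X)
    (hHrec : ∀ n, H (n + 1) = α n • H n + (1 - α n) • T n (H n))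
    (hlam : ∀ n, H (n + 1) ≠ 0 → 0 < lam n ∧ lam n ≤ 2 / frob ((H (n + 1))ᵀ * H (n + 1)))
    (hS : ∀ n, H (n + 1) ≠ 0 → ∀ X, S n X = pplus (X - lam n • ((X * H (n + 1) - V) * (H (n + 1))ᵀ)))
    (hS0 : ∀ n, H (n + 1) = 0 → ∀ X, S n X = X)
    (hWrec : ∀ n, W (n + 1) = β n • W n + (1 - β n) • S n (W n))
    (hA1 : ∃ m₀ : ℕ,
      (∃ Wf : Matrix (Fin M) (Fin R) ℝ, ∀ n ≥ m₀, S n Wf = Wf) ∧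
      (∃ Hf : Matrix (Fin R) (Fin N) ℝ, ∀ n ≥ m₀, T n Hf = Hf))
    (hC1α : 0 < atTop.liminf (fun n => α n) ∧ atTop.limsup (fun n => α n) < 1)
    (hC1β : 0 < atTop.liminf (fun n => β n) ∧ atTop.limsup (fun n => β n) < 1)
    (hC2μ : 0 < atTop.liminf (fun n => μ n))
    (hC2lam : 0 < atTop.liminf (fun n => lam n))
    :
    ∀ (Ws : Matrix (Fin M) (Fin R) ℝ) (Hs : Matrix (Fin R) (Fin N) ℝ),
      (∃ φ : ℕ → ℕ, StrictMono φ ∧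
        Tendsto (fun i => frob (W (φ i) - Ws)) atTop (nhds 0) ∧
        Tendsto (fun i => frob (H (φ i) - Hs)) atTop (nhds 0)) →
      matNonneg Ws ∧ matNonneg Hs ∧
        ∀ (W' : Matrix (Fin M) (Fin R) ℝ) (H' : Matrix (Fin R) (Fin N) ℝ),
          matNonneg W' → matNonneg H' →
          fip (W' - Ws) ((Ws * Hs - V) * Hsᵀ) + fip (H' - Hs) (Wsᵀ * (Ws * Hs - V)) ≥ 0 := by
  classical
  obtain ⟨m₀, ⟨Wf, hWf⟩, ⟨Hf, hHf⟩⟩ := hA1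
  -- nonnegativity of the iterates
  have hHWnn : ∀ n, matNonneg (H n) ∧ matNonneg (W n) := by
    intro n
    induction n with
    | zero => exact ⟨hH0, hW0⟩
    | succ n ih =>
      constructor
      · rw [hHrec n]
        intro i j
        have hTnn : 0 ≤ T n (H n) i j := by
          by_cases hw : W n = 0
          · rw [hT0 n hw]; exact ih.1 i j
          · rw [hT n hw]; simp only [pplus, Matrix.of_apply]; exact le_max_right _ _
        have h1 := (hα n).1; have h2 := (hα n).2
        have h3 := ih.1 i j
        simp only [Matrix.add_apply, Matrix.smul_apply, smul_eq_mul]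
        nlinarith
      · rw [hWrec n]
        intro i j
        have hSnn : 0 ≤ S n (W n) i j := by
          by_cases hw : H (n+1) = 0
          · rw [hS0 n hw]; exact ih.2 i j
          · rw [hS n hw]; simp only [pplus, Matrix.of_apply]; exact le_max_right _ _
        have h1 := (hβ n).1; have h2 := (hβ n).2
        have h3 := ih.2 i j
        simp only [Matrix.add_apply, Matrix.smul_apply, smul_eq_mul]
        nlinarith
  have hHnn : ∀ n, matNonneg (H n) := fun n => (hHWnn n).1
  have hWnn : ∀ n, matNonneg (W n) := fun n => (hHWnn n).2
  -- quasi-nonexpansiveness of the operators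
  have hfrW : ∀ n, W n ≠ 0 → μ n * frob ((W n)ᵀ * W n) ≤ 2 := by
    intro n hw
    have hf := frob_pos (AtA_ne_zero hw)
    exact (le_div_iff₀ hf).mp (hμ n hw).2
  have hTq : ∀ n X Y, fip (T n X - T n Y) (T n X - T n Y) ≤ fip (X - Y) (X - Y) := by
    intro n X Y
    by_cases hw : W n = 0
    · rw [hT0 n hw, hT0 n hw]
    · rw [hT n hw, hT n hw]
      refine le_trans (pplus_nonexp _ _) ?_
      have hd : (X - μ n • ((W n)ᵀ * (W n * X - V))) - (Y - μ n • ((W n)ᵀ * (W n * Y - V)))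
          = (X - Y) - μ n • ((W n)ᵀ * (W n * (X - Y))) := by
        rw [sub_sub_sub_comm, ← smul_sub, ← Matrix.mul_sub, sub_sub_sub_cancel_right,
          ← Matrix.mul_sub]
      rw [hd]
      exact left_nonexp _ _ _ (hμ n hw).1.le (hfrW n hw)
  have hfrH : ∀ n, H (n+1) ≠ 0 → lam n * frob ((H (n+1))ᵀ * H (n+1)) ≤ 2 := by
    intro n hw
    have hf := frob_pos (AtA_ne_zero hw)
    exact (le_div_iff₀ hf).mp (hlam n hw).2
  have hSq : ∀ n X Y, fip (S n X - S n Y) (S n X - S n Y) ≤ fip (X - Y) (X - Y) := by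
    intro n X Y
    by_cases hw : H (n+1) = 0
    · rw [hS0 n hw, hS0 n hw]
    · rw [hS n hw, hS n hw]
      refine le_trans (pplus_nonexp _ _) ?_
      have hd : (X - lam n • ((X * H (n+1) - V) * (H (n+1))ᵀ))
            - (Y - lam n • ((Y * H (n+1) - V) * (H (n+1))ᵀ))
          = (X - Y) - lam n • (((X - Y) * H (n+1)) * (H (n+1))ᵀ) := by
        rw [sub_sub_sub_comm, ← smul_sub, ← Matrix.sub_mul, sub_sub_sub_cancel_right,
          ← Matrix.sub_mul]
      rw [hd]
      exact right_nonexp _ _ _ (hlam n hw).1.le (hfrH n hw)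
  -- residuals tend to zero
  obtain ⟨εα, hεα, hevα⟩ := aux_c_bound hα hC1α.1 hC1α.2
  obtain ⟨εβ, hεβ, hevβ⟩ := aux_c_bound hβ hC1β.1 hC1β.2
  have hTres : Tendsto (fun n => fip (T n (H n) - H n) (T n (H n) - H n)) atTop (nhds 0) := by
    apply mann_resid_tendsto (a := fun n => fip (H n - Hf) (H n - Hf))
      (c := fun n => α n * (1 - α n)) (m₀ := m₀) _ (fun n => fip_self_nonneg _)
      (fun n => fip_self_nonneg _)
      (fun n => mul_nonneg (hα n).1 (by linarith [(hα n).2])) hεα hevα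
    intro n hn
    show fip (H (n+1) - Hf) (H (n+1) - Hf) ≤ fip (H n - Hf) (H n - Hf) - α n * (1 - α n) * fip (T n (H n) - H n) (T n (H n) - H n)
    have hrec : H (n+1) - Hf = α n • (H n - Hf) + (1 - α n) • (T n (H n) - Hf) := by
      rw [hHrec n]; module
    rw [hrec, convex_comb_identity, fip_res_symm]
    have hq : fip (T n (H n) - Hf) (T n (H n) - Hf) ≤ fip (H n - Hf) (H n - Hf) := by
      have h0 := hTq n (H n) Hf
      rwa [hHf n hn] at h0
    nlinarith [mul_le_mul_of_nonneg_left hq (by linarith [(hα n).2] : (0:ℝ) ≤ 1 - α n)]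
  have hSres : Tendsto (fun n => fip (S n (W n) - W n) (S n (W n) - W n)) atTop (nhds 0) := by
    apply mann_resid_tendsto (a := fun n => fip (W n - Wf) (W n - Wf))
      (c := fun n => β n * (1 - β n)) (m₀ := m₀) _ (fun n => fip_self_nonneg _)
      (fun n => fip_self_nonneg _)
      (fun n => mul_nonneg (hβ n).1 (by linarith [(hβ n).2])) hεβ hevβ
    intro n hn
    show fip (W (n+1) - Wf) (W (n+1) - Wf) ≤ fip (W n - Wf) (W n - Wf) - β n * (1 - β n) * fip (S n (W n) - W n) (S n (W n) - W n)
    have hrec : W (n+1) - Wf = β n • (W n - Wf) + (1 - β n) • (S n (W n) - Wf) := by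
      rw [hWrec n]; module
    rw [hrec, convex_comb_identity, fip_res_symm]
    have hq : fip (S n (W n) - Wf) (S n (W n) - Wf) ≤ fip (W n - Wf) (W n - Wf) := by
      have h0 := hSq n (W n) Wf
      rwa [hWf n hn] at h0
    nlinarith [mul_le_mul_of_nonneg_left hq (by linarith [(hβ n).2] : (0:ℝ) ≤ 1 - β n)]
  have hTfrob : Tendsto (fun n => frob (T n (H n) - H n)) atTop (nhds 0) := by
    have h0 := (Real.continuous_sqrt.tendsto 0).comp hTres
    simp only [Real.sqrt_zero] at h0
    exact h0.congr (fun n => (frob_eq_sqrt_fip _).symm)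
  have hSfrob : Tendsto (fun n => frob (S n (W n) - W n)) atTop (nhds 0) := by
    have h0 := (Real.continuous_sqrt.tendsto 0).comp hSres
    simp only [Real.sqrt_zero] at h0
    exact h0.congr (fun n => (frob_eq_sqrt_fip _).symm)
  have hHdiff : Tendsto (fun n => frob (H (n+1) - H n)) atTop (nhds 0) := by
    apply squeeze_zero (fun n => frob_nonneg _) _ hTfrob
    intro n
    have h0 : H (n+1) - H n = (1 - α n) • (T n (H n) - H n) := by rw [hHrec n]; module
    rw [h0, frob_smul]
    have h2 : |1 - α n| ≤ 1 := by
      rw [abs_le]; constructor <;> [linarith [(hα n).2]; linarith [(hα n).1]]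
    calc |1 - α n| * frob (T n (H n) - H n) ≤ 1 * frob (T n (H n) - H n) :=
          mul_le_mul_of_nonneg_right h2 (frob_nonneg _)
      _ = frob (T n (H n) - H n) := one_mul _
  -- main part
  rintro Ws Hs ⟨φ, hφ, hWc, hHc⟩
  have MTW : MT (fun i => W (φ i)) Ws := MT_of_frob hWc
  have MTH : MT (fun i => H (φ i)) Hs := MT_of_frob hHc
  have hWsnn : matNonneg Ws := MTW.matNonneg_lim (fun k => hWnn (φ k))
  have hHsnn : matNonneg Hs := MTH.matNonneg_lim (fun k => hHnn (φ k))
  have MTH1 : MT (fun i => H (φ i + 1)) Hs := by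
    apply MTH.congr'
    have h0 : Tendsto (fun i => frob (H (φ i + 1) - H (φ i))) atTop (nhds 0) :=
      hHdiff.comp hφ.tendsto_atTop
    exact h0.congr (fun i => frob_sub_comm _ _)
  refine ⟨hWsnn, hHsnn, ?_⟩
  intro W' H' hW' hH'
  have hHside : 0 ≤ fip (H' - Hs) (Wsᵀ * (Ws * Hs - V)) := by
    by_cases hWs0 : Ws = 0
    · rw [hWs0]
      simp only [Matrix.transpose_zero, Matrix.zero_mul, fip_zero_right]
      exact le_refl 0
    · have hfr0 : 0 < frob (Wsᵀ * Ws) := frob_pos (AtA_ne_zero hWs0)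
      obtain ⟨dmu, hdmu, hevμ⟩ := exists_pos_eventually_le_of_liminf_pos hC2μ
      have hfrT : Tendsto (fun i => frob ((W (φ i))ᵀ * W (φ i))) atTop
          (nhds (frob (Wsᵀ * Ws))) := (MTW.transpose.mul MTW).frobTendsto
      have hev1 : ∀ᶠ i in atTop, frob (Wsᵀ * Ws)/2 < frob ((W (φ i))ᵀ * W (φ i)) :=
        hfrT.eventually (eventually_gt_nhds (by linarith))
      have hevne : ∀ᶠ i in atTop, W (φ i) ≠ 0 := by
        filter_upwards [hev1] with i h1
        intro h0
        rw [h0] at h1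
        simp only [Matrix.transpose_zero, Matrix.zero_mul, frob_zero] at h1
        linarith
      have hevμφ : ∀ᶠ i in atTop, dmu ≤ μ (φ i) := hφ.tendsto_atTop.eventually hevμ
      set Mμ : ℝ := 4 / frob (Wsᵀ * Ws) with hMμ
      have hevub : ∀ᶠ i in atTop, μ (φ i) ≤ Mμ := by
        filter_upwards [hev1, hevne] with i h1 h2
        have h3 := (hμ (φ i) h2).2
        have h4 : 0 < frob (Wsᵀ * Ws)/2 := by linarith
        calc μ (φ i) ≤ 2 / frob ((W (φ i))ᵀ * W (φ i)) := h3
          _ ≤ 2 / (frob (Wsᵀ * Ws)/2) := by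
              apply div_le_div_of_nonneg_left two_pos.le h4 h1.le
          _ = Mμ := by rw [hMμ]; field_simp; norm_num
      set μc : ℕ → ℝ := fun i => min Mμ (max dmu (μ (φ i))) with hμcdef
      have hdM : dmu ≤ Mμ := by
        obtain ⟨i, h1, h2⟩ := (hevμφ.and hevub).exists
        linarith
      have hmem : ∀ i, μc i ∈ Set.Icc dmu Mμ := by
        intro i
        exact ⟨le_min hdM (le_max_left _ _), min_le_left _ _⟩
      obtain ⟨μs, hμsmem, ψ, hψ, hμψ⟩ := (isCompact_Icc).tendsto_subseq hmem
      have hμspos : 0 < μs := lt_of_lt_of_le hdmu hμsmem.1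
      have hevclamp : ∀ᶠ i in atTop, μc i = μ (φ i) := by
        filter_upwards [hevμφ, hevub] with i h1 h2
        simp only [hμcdef]
        rw [max_eq_right h1, min_eq_right h2]
      have hμconv : Tendsto (fun i => μ (φ (ψ i))) atTop (nhds μs) :=
        hμψ.congr' (hψ.tendsto_atTop.eventually hevclamp)
      have MTWψ : MT (fun i => W (φ (ψ i))) Ws := MTW.comp hψ
      have MTHψ : MT (fun i => H (φ (ψ i))) Hs := MTH.comp hψ
      have MTinner : MT (fun i => H (φ (ψ i))
            - μ (φ (ψ i)) • ((W (φ (ψ i)))ᵀ * (W (φ (ψ i)) * H (φ (ψ i)) - V)))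
          (Hs - μs • (Wsᵀ * (Ws * Hs - V))) :=
        MTHψ.sub (MT.smul hμconv (MTWψ.transpose.mul ((MTWψ.mul MTHψ).sub (MT.const V))))
      have MTY : MT (fun i => T (φ (ψ i)) (H (φ (ψ i))))
          (pplus (Hs - μs • (Wsᵀ * (Ws * Hs - V)))) := by
        apply (MTinner.pplus).congr_event
        filter_upwards [hψ.tendsto_atTop.eventually hevne] with i hne
        exact (hT _ hne _).symm
      have MTY2 : MT (fun i => T (φ (ψ i)) (H (φ (ψ i)))) Hs := by
        apply MTHψ.congr'
        have h0 : Tendsto (fun i => frob (T (φ (ψ i)) (H (φ (ψ i))) - H (φ (ψ i)))) atTop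
            (nhds 0) := hTfrob.comp (hφ.comp hψ).tendsto_atTop
        exact h0.congr (fun i => frob_sub_comm _ _)
      have hfix : pplus (Hs - μs • (Wsᵀ * (Ws * Hs - V))) = Hs := MTY.unique MTY2
      exact vi_of_fixed hμspos hfix.symm H' hH'
  have hWside : 0 ≤ fip (W' - Ws) ((Ws * Hs - V) * Hsᵀ) := by
    by_cases hHs0 : Hs = 0
    · rw [hHs0]
      simp only [Matrix.transpose_zero, Matrix.mul_zero, fip_zero_right]
      exact le_refl 0
    · have hfr0 : 0 < frob (Hsᵀ * Hs) := frob_pos (AtA_ne_zero hHs0)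
      obtain ⟨dl_, hdl_, hevl⟩ := exists_pos_eventually_le_of_liminf_pos hC2lam
      have hfrT : Tendsto (fun i => frob ((H (φ i + 1))ᵀ * H (φ i + 1))) atTop
          (nhds (frob (Hsᵀ * Hs))) := (MTH1.transpose.mul MTH1).frobTendsto
      have hev1 : ∀ᶠ i in atTop, frob (Hsᵀ * Hs)/2 < frob ((H (φ i + 1))ᵀ * H (φ i + 1)) :=
        hfrT.eventually (eventually_gt_nhds (by linarith))
      have hevne : ∀ᶠ i in atTop, H (φ i + 1) ≠ 0 := by
        filter_upwards [hev1] with i h1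
        intro h0
        rw [h0] at h1
        simp only [Matrix.transpose_zero, Matrix.zero_mul, frob_zero] at h1
        linarith
      have hevlphi : ∀ᶠ i in atTop, dl_ ≤ lam (φ i) := hφ.tendsto_atTop.eventually hevl
      set Ml_ : ℝ := 4 / frob (Hsᵀ * Hs) with hMl_
      have hevub : ∀ᶠ i in atTop, lam (φ i) ≤ Ml_ := by
        filter_upwards [hev1, hevne] with i h1 h2
        have h3 := (hlam (φ i) h2).2
        have h4 : 0 < frob (Hsᵀ * Hs)/2 := by linarith
        calc lam (φ i) ≤ 2 / frob ((H (φ i + 1))ᵀ * H (φ i + 1)) := h3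
          _ ≤ 2 / (frob (Hsᵀ * Hs)/2) := by
              apply div_le_div_of_nonneg_left two_pos.le h4 h1.le
          _ = Ml_ := by rw [hMl_]; field_simp; norm_num
      set lc : ℕ → ℝ := fun i => min Ml_ (max dl_ (lam (φ i))) with hlcdef
      have hdM : dl_ ≤ Ml_ := by
        obtain ⟨i, h1, h2⟩ := (hevlphi.and hevub).exists
        linarith
      have hmem : ∀ i, lc i ∈ Set.Icc dl_ Ml_ := by
        intro i
        exact ⟨le_min hdM (le_max_left _ _), min_le_left _ _⟩
      obtain ⟨ls, hlsmem, ψ, hψ, hlψ⟩ := (isCompact_Icc).tendsto_subseq hmem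
      have hlspos : 0 < ls := lt_of_lt_of_le hdl_ hlsmem.1
      have hevclamp : ∀ᶠ i in atTop, lc i = lam (φ i) := by
        filter_upwards [hevlphi, hevub] with i h1 h2
        simp only [hlcdef]
        rw [max_eq_right h1, min_eq_right h2]
      have hlconv : Tendsto (fun i => lam (φ (ψ i))) atTop (nhds ls) :=
        hlψ.congr' (hψ.tendsto_atTop.eventually hevclamp)
      have MTWψ : MT (fun i => W (φ (ψ i))) Ws := MTW.comp hψ
      have MTH1ψ : MT (fun i => H (φ (ψ i) + 1)) Hs := MTH1.comp hψ
      have MTinner : MT (fun i => W (φ (ψ i))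
            - lam (φ (ψ i)) • ((W (φ (ψ i)) * H (φ (ψ i) + 1) - V) * (H (φ (ψ i) + 1))ᵀ))
          (Ws - ls • ((Ws * Hs - V) * Hsᵀ)) :=
        MTWψ.sub (MT.smul hlconv (((MTWψ.mul MTH1ψ).sub (MT.const V)).mul MTH1ψ.transpose))
      have MTY : MT (fun i => S (φ (ψ i)) (W (φ (ψ i))))
          (pplus (Ws - ls • ((Ws * Hs - V) * Hsᵀ))) := by
        apply (MTinner.pplus).congr_event
        filter_upwards [hψ.tendsto_atTop.eventually hevne] with i hne
        exact (hS _ hne _).symm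
      have MTY2 : MT (fun i => S (φ (ψ i)) (W (φ (ψ i)))) Ws := by
        apply (MTWψ).congr'
        have h0 : Tendsto (fun i => frob (S (φ (ψ i)) (W (φ (ψ i))) - W (φ (ψ i)))) atTop
            (nhds 0) := hSfrob.comp (hφ.comp hψ).tendsto_atTop
        exact h0.congr (fun i => frob_sub_comm _ _)
      have hfix : pplus (Ws - ls • ((Ws * Hs - V) * Hsᵀ)) = Ws := MTY.unique MTY2
      exact vi_of_fixed hlspos hfix.symm W' hW'
  linarith
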